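/- The space CF is homotopy equivalent to its subspace DF. -/

import Mathlib

/-- The set `CF_n ⊆ ℝ^n`: nondecreasing tuples with `t_{i+2} - t_i ≥ 1`. -/
def CFset (n : ℕ) : Set (Fin n → ℝ) :=
  {t | Monotone t ∧ ∀ (i : ℕ) (h : i + 2 < n), 1 ≤ t ⟨i + 2, h⟩ - t ⟨i, by omega⟩}

/-- `CF_n` as a topological space (subspace of `ℝ^n`). -/
abbrev CFn (n : ℕ) := ↥(CFset n)

/-- The disjoint union `⨿_{n ≥ 1} CF_n`. -/
abbrev PreCF := (n : ℕ) × CFn (n + 1)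

/-- Duplication of the `i`-th entry of a tuple. -/
def dup {n : ℕ} (t : Fin (n + 1) → ℝ) (i : Fin (n + 1)) : Fin (n + 2) → ℝ :=
  Fin.insertNth i.castSucc (t i) t

/-- The identification: a tuple is related to the result of duplicating one of its
entries, whenever the duplicated tuple still lies in the relevant `CF_{n+1}`. -/
def CFrel : PreCF → PreCF → Prop := fun x y =>
  ∃ (i : Fin (x.1 + 1)) (h : dup (x.2 : Fin (x.1 + 1) → ℝ) i ∈ CFset (x.1 + 2)),
    y = ⟨x.1 + 1, ⟨dup (x.2 : Fin (x.1 + 1) → ℝ) i, h⟩⟩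

/-- Belk's space `CF`: the quotient of `⨿ CF_n` by the identifications. -/
abbrev CF := Quot CFrel

/-- A basepoint of `CF`: the one-point configuration `(1)`. -/
def CFbase : CF :=
  Quot.mk CFrel ⟨0, ⟨fun _ => 1, ⟨monotone_const, fun i h => absurd h (by omega)⟩⟩⟩

/-- The defining conditions of `DF` on a tuple: `t_1 = 1`; consecutive differences are
at most `1`; and whenever a consecutive difference is less than `1`, the neighboring
consecutive differences (when they exist) equal `1`. -/
def DFcond {n : ℕ} (t : Fin n → ℝ) : Prop :=
  (∀ h : 0 < n, t ⟨0, h⟩ = 1) ∧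
  (∀ (i : ℕ) (h : i + 1 < n), t ⟨i + 1, h⟩ - t ⟨i, by omega⟩ ≤ 1) ∧
  (∀ (i : ℕ) (h : i + 1 < n), t ⟨i + 1, h⟩ - t ⟨i, by omega⟩ < 1 →
    (∀ h1 : 1 ≤ i, t ⟨i, by omega⟩ - t ⟨i - 1, by omega⟩ = 1) ∧
    (∀ h2 : i + 2 < n, t ⟨i + 2, h2⟩ - t ⟨i + 1, h⟩ = 1))

/-- The subspace `DF ⊆ CF` of points representable by a tuple satisfying `DFcond`. -/
def DF : Set CF :=
  {x | ∃ (n : ℕ) (t : Fin (n + 1) → ℝ) (ht : t ∈ CFset (n + 1)),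
    DFcond t ∧ x = Quot.mk CFrel ⟨n, ⟨t, ht⟩⟩}


open unitInterval

namespace Belk




noncomputable section

def Good (s : ℕ → ℝ) : Prop := Monotone s ∧ ∀ i, 1 ≤ s (i + 2) - s i

def gp (s : ℕ → ℝ) (i : ℕ) : ℝ := s (i + 1) - s i

def Tight (s : ℕ → ℝ) : Prop := ∀ i, gp s i ≤ 1

def T (s : ℕ → ℝ) (i : ℕ) : ℝ := s i - s 0 + 1

def Uh (s : ℕ → ℝ) : ℕ → ℝ
  | 0 => s 0
  | i + 1 => Uh s i + min 1 (s (i + 1) - s i)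

def mn (s : ℕ → ℝ) (i : ℕ) : ℝ :=
  min (if i = 0 then 1 else gp s (i - 1)) (gp s (i + 1))

def ee (s : ℕ → ℝ) (i : ℕ) : ℝ := min 1 (1 + gp s i - mn s i)

def V (s : ℕ → ℝ) : ℕ → ℝ
  | 0 => s 0
  | i + 1 => V s i + ee s i

def itp (a : ℝ) (s s' : ℕ → ℝ) (i : ℕ) : ℝ := (1 - a) * s i + a * s' i

def h1 (a : ℝ) (s : ℕ → ℝ) (i : ℕ) : ℝ := s i - a * (s 0 - 1)

def σf (k i : ℕ) : ℕ := if i ≤ k then i else i - 1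

def cmp (k : ℕ) (s : ℕ → ℝ) (i : ℕ) : ℝ := s (σf k i)

/-! ### basic gap facts -/

lemma gp_nonneg {s : ℕ → ℝ} (hs : Monotone s) (i : ℕ) : 0 ≤ gp s i :=
  sub_nonneg.2 (hs (Nat.le_succ i))

lemma monotone_of_gp {s : ℕ → ℝ} (h : ∀ i, 0 ≤ gp s i) : Monotone s :=
  monotone_nat_of_le_succ fun i => by have := h i; simp [gp] at this; linarith

/-! ### T -/

lemma gp_T (s : ℕ → ℝ) (i : ℕ) : gp (T s) i = gp s i := by simp only [gp, T]; ring

lemma T_zero (s : ℕ → ℝ) : T s 0 = 1 := by simp [T]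

lemma good_T {s : ℕ → ℝ} (hs : Good s) : Good (T s) := by
  constructor
  · exact monotone_of_gp fun i => by rw [gp_T]; exact gp_nonneg hs.1 i
  · intro i
    have := hs.2 i
    simp only [T]
    linarith

/-! ### Uh -/

lemma Uh_gp (s : ℕ → ℝ) (i : ℕ) : gp (Uh s) i = min 1 (gp s i) := by
  simp [gp, Uh]

lemma good_Uh {s : ℕ → ℝ} (hs : Good s) : Good (Uh s) := by
  constructor
  · refine monotone_of_gp fun i => ?_
    rw [Uh_gp]
    exact le_min zero_le_one (gp_nonneg hs.1 i)
  · intro i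
    have h2 := hs.2 i
    have e1 : Uh s (i + 2) - Uh s i = min 1 (gp s i) + min 1 (gp s (i + 1)) := by
      simp only [Uh, gp]; ring
    have g0 := gp_nonneg hs.1 i
    have g1 := gp_nonneg hs.1 (i + 1)
    have hsum : gp s i + gp s (i + 1) = s (i + 2) - s i := by simp only [gp]; ring
    rw [e1]
    rcases le_total 1 (gp s i) with h | h
    · rw [min_eq_left h]
      have : (0:ℝ) ≤ min 1 (gp s (i+1)) := le_min zero_le_one g1
      linarith
    · rw [min_eq_right h]
      rcases le_total 1 (gp s (i+1)) with h' | h'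
      · rw [min_eq_left h']; linarith
      · rw [min_eq_right h']; linarith

lemma tight_Uh (s : ℕ → ℝ) : Tight (Uh s) := fun i => by
  rw [Uh_gp]; exact min_le_left _ _

lemma Uh_zero (s : ℕ → ℝ) : Uh s 0 = s 0 := rfl

lemma Uh_eq_of_tight {s : ℕ → ℝ} (ht : Tight s) : ∀ i, Uh s i = s i := by
  intro i
  induction i with
  | zero => rfl
  | succ i ih =>
    have := ht i
    simp only [Uh, ih, gp] at *
    rw [min_eq_right this]
    ring

lemma gp_Uh_eq_one {s : ℕ → ℝ} {i : ℕ} (h : 1 ≤ gp s i) : gp (Uh s) i = 1 := by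
  rw [Uh_gp, min_eq_left h]

/-! ### ee / V -/

lemma mn_zero (s : ℕ → ℝ) : mn s 0 = min 1 (gp s 1) := by simp [mn]

lemma mn_succ (s : ℕ → ℝ) (i : ℕ) : mn s (i + 1) = min (gp s i) (gp s (i + 2)) := by
  simp [mn]

lemma mn_le_one {s : ℕ → ℝ} (ht : Tight s) (i : ℕ) : mn s i ≤ 1 :=
  le_trans (min_le_right _ _) (ht (i + 1))

lemma mn_nonneg {s : ℕ → ℝ} (hs : Monotone s) (i : ℕ) : 0 ≤ mn s i := by
  refine le_min ?_ (gp_nonneg hs _)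
  split
  · exact zero_le_one
  · exact gp_nonneg hs _

lemma ee_le_one (s : ℕ → ℝ) (i : ℕ) : ee s i ≤ 1 := min_le_left _ _

lemma gp_le_ee {s : ℕ → ℝ} (hs : Monotone s) (ht : Tight s) (i : ℕ) : gp s i ≤ ee s i :=
  le_min (ht i) (by have := mn_le_one ht i; linarith)

lemma ee_nonneg {s : ℕ → ℝ} (hs : Monotone s) (ht : Tight s) (i : ℕ) : 0 ≤ ee s i :=
  le_trans (gp_nonneg hs i) (gp_le_ee hs ht i)

lemma ee_eq_one {s : ℕ → ℝ} {i : ℕ} (h : mn s i ≤ gp s i) : ee s i = 1 :=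
  min_eq_left (by linarith)

lemma V_zero (s : ℕ → ℝ) : V s 0 = s 0 := rfl

lemma gp_V (s : ℕ → ℝ) (i : ℕ) : gp (V s) i = ee s i := by simp only [gp, V]; ring

lemma good_V {s : ℕ → ℝ} (hg : Good s) (ht : Tight s) : Good (V s) := by
  constructor
  · exact monotone_of_gp fun i => by rw [gp_V]; exact ee_nonneg hg.1 ht i
  · intro i
    have e1 : V s (i + 2) - V s i = ee s i + ee s (i + 1) := by simp only [V]; ring
    have h2 := hg.2 i
    have hsum : gp s i + gp s (i + 1) = s (i + 2) - s i := by simp only [gp]; ring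
    have := gp_le_ee hg.1 ht i
    have := gp_le_ee hg.1 ht (i + 1)
    linarith

lemma tight_V (s : ℕ → ℝ) : Tight (V s) := fun i => by rw [gp_V]; exact ee_le_one s i

/-- The key combinatorial property: the output of the `V`-stage satisfies the
`DF` local condition. -/
lemma Lprop {s : ℕ → ℝ} (hs : Monotone s) (ht : Tight s) {i : ℕ} (h : ee s i < 1) :
    (1 ≤ i → ee s (i - 1) = 1) ∧ ee s (i + 1) = 1 := by
  have hlt : gp s i < mn s i := by
    by_contra hc
    push_neg at hc
    rw [ee_eq_one hc] at h
    exact lt_irrefl _ h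
  have hR : gp s i < gp s (i + 1) := lt_of_lt_of_le hlt (min_le_right _ _)
  constructor
  · intro h1
    have hL : gp s i < gp s (i - 1) := by
      have hle : mn s i ≤ gp s (i - 1) := by
        unfold mn
        rw [if_neg (by omega : ¬ i = 0)]
        exact min_le_left _ _
      exact lt_of_lt_of_le hlt hle
    apply ee_eq_one
    have e1 : i - 1 + 1 = i := by omega
    calc mn s (i - 1) ≤ gp s (i - 1 + 1) := min_le_right _ _
    _ = gp s i := by rw [e1]
    _ ≤ gp s (i - 1) := le_of_lt hL
  · apply ee_eq_one
    rw [mn_succ]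
    calc min (gp s i) (gp s (i + 2)) ≤ gp s i := min_le_left _ _
    _ ≤ gp s (i + 1) := le_of_lt hR

lemma V_eq_of_DF {s : ℕ → ℝ} (hs : Monotone s) (ht : Tight s)
    (hdf : ∀ i, gp s i < 1 → ((1 ≤ i → gp s (i - 1) = 1) ∧ gp s (i + 1) = 1)) :
    ∀ i, V s i = s i := by
  have hee : ∀ i, ee s i = gp s i := by
    intro i
    rcases lt_or_ge (gp s i) 1 with h | h
    · obtain ⟨hL, hR⟩ := hdf i h
      have hmn : mn s i = 1 := by
        unfold mn
        rw [hR]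
        rcases Nat.eq_zero_or_pos i with h0 | h0
        · subst h0; simp
        · rw [if_neg (by omega), hL (by omega)]; simp
      unfold ee
      rw [hmn]
      simp
      exact le_of_lt h
    · have h1 : gp s i = 1 := le_antisymm (ht i) h
      rw [ee_eq_one (by rw [h1]; exact mn_le_one ht i), h1]
  intro i
  induction i with
  | zero => rfl
  | succ i ih =>
    rw [show V s (i + 1) = V s i + ee s i from rfl, ih, hee]
    simp [gp]

/-! ### interpolation -/

lemma itp_zero (s s' : ℕ → ℝ) : itp 0 s s' = s := by funext i; simp [itp]

lemma itp_one (s s' : ℕ → ℝ) : itp 1 s s' = s' := by funext i; simp [itp]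

lemma good_itp {a : ℝ} (h0 : 0 ≤ a) (h1 : a ≤ 1) {s s' : ℕ → ℝ}
    (hs : Good s) (hs' : Good s') : Good (itp a s s') := by
  constructor
  · intro i j hij
    simp only [itp]
    have := hs.1 hij
    have := hs'.1 hij
    nlinarith
  · intro i
    have := hs.2 i
    have := hs'.2 i
    simp only [itp]
    nlinarith

/-! ### cmp lemmas -/

lemma σf_le {k i : ℕ} (h : i ≤ k) : σf k i = i := if_pos h

lemma σf_gt {k i : ℕ} (h : k < i) : σf k i = i - 1 := if_neg (by omega)

lemma σf_zero (k : ℕ) : σf k 0 = 0 := σf_le (Nat.zero_le k)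

lemma h1_cmp (a : ℝ) (k : ℕ) (s : ℕ → ℝ) : h1 a (cmp k s) = cmp k (h1 a s) := by
  funext i; simp [h1, cmp, σf_zero]

lemma T_cmp (k : ℕ) (s : ℕ → ℝ) : T (cmp k s) = cmp k (T s) := by
  funext i; simp [T, cmp, σf_zero]

lemma itp_cmp (a : ℝ) (k : ℕ) (s s' : ℕ → ℝ) :
    itp a (cmp k s) (cmp k s') = cmp k (itp a s s') := rfl

lemma gp_cmp_lt {k i : ℕ} (s : ℕ → ℝ) (h : i < k) : gp (cmp k s) i = gp s i := by
  simp [gp, cmp, σf_le (by omega : i ≤ k), σf_le (by omega : i + 1 ≤ k)]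

lemma gp_cmp_eq {k : ℕ} (s : ℕ → ℝ) : gp (cmp k s) k = 0 := by
  simp [gp, cmp, σf_le (le_refl k), σf_gt (by omega : k < k + 1)]

lemma gp_cmp_gt {k i : ℕ} (s : ℕ → ℝ) (h : k < i) : gp (cmp k s) i = gp s (i - 1) := by
  have h1 : σf k (i + 1) = i := by rw [σf_gt (by omega)]; omega
  have h2 : σf k i = i - 1 := σf_gt h
  have h3 : i - 1 + 1 = i := by omega
  simp only [gp, cmp, h1, h2, h3]

lemma Uh_cmp (k : ℕ) (s : ℕ → ℝ) : ∀ i, Uh (cmp k s) i = Uh s (σf k i) := by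
  intro i
  induction i with
  | zero => simp [Uh, cmp, σf_zero]
  | succ i ih =>
    have step : Uh (cmp k s) (i + 1) = Uh (cmp k s) i + min 1 (gp (cmp k s) i) := rfl
    rcases lt_trichotomy i k with h | h | h
    · rw [step, ih, σf_le (by omega : i ≤ k), σf_le (by omega : i + 1 ≤ k),
        gp_cmp_lt s h]
      rfl
    · subst h
      rw [step, ih, σf_le (le_refl i), σf_gt (by omega : i < i + 1), gp_cmp_eq s]
      simp
    · rw [step, ih, σf_gt h, σf_gt (by omega : k < i + 1), gp_cmp_gt s h]
      have e : i - 1 + 1 = i := by omega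
      have : Uh s (i - 1 + 1) = Uh s (i - 1) + min 1 (gp s (i - 1)) := rfl
      rw [e] at this
      rw [show i + 1 - 1 = i from rfl, this]

section eeCmp

variable {s : ℕ → ℝ} {k : ℕ} (hm : Monotone s) (htt : Tight s)
  (hL : 1 ≤ k → gp s (k - 1) = 1) (hR : gp s k = 1)

include hm htt hL hR in
lemma ee_cmp : ∀ i, ee (cmp k s) i =
    if i < k then ee s i else if i = k then 0 else ee s (i - 1) := by
  intro i
  rcases lt_trichotomy i k with hik | hik | hik
  · rw [if_pos hik]
    rcases lt_or_ge (i + 1) k with hik1 | hik1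
    · -- interior case: everything below k
      unfold ee mn
      rw [gp_cmp_lt s hik, gp_cmp_lt s hik1]
      by_cases h0 : i = 0
      · simp [h0]
      · rw [if_neg h0, if_neg h0, gp_cmp_lt s (by omega : i - 1 < k)]
    · -- i + 1 = k
      have hik1' : i + 1 = k := by omega
      have hgpi : gp s i = 1 := by
        have := hL (by omega)
        rwa [show k - 1 = i by omega] at this
      have hcmpi : gp (cmp k s) i = 1 := by rw [gp_cmp_lt s hik]; exact hgpi
      have hmn : mn (cmp k s) i = 0 := by
        unfold mn
        rw [show i + 1 = k from hik1', gp_cmp_eq s]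
        rcases Nat.eq_zero_or_pos i with h0 | h0
        · simp [h0]
        · rw [if_neg (by omega), gp_cmp_lt s (by omega : i - 1 < k)]
          exact min_eq_right (gp_nonneg hm _)
      have lhs1 : ee (cmp k s) i = 1 := by
        unfold ee
        rw [hmn, hcmpi]
        norm_num
      have rhs1 : ee s i = 1 := by
        apply ee_eq_one
        rw [hgpi]
        exact mn_le_one htt i
      rw [lhs1, rhs1]
  · subst hik
    rw [if_neg (lt_irrefl i), if_pos rfl]
    have hmn : mn (cmp i s) i = 1 := by
      unfold mn
      rw [gp_cmp_gt s (by omega : i < i + 1), show i + 1 - 1 = i from rfl, hR]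
      rcases Nat.eq_zero_or_pos i with h0 | h0
      · simp [h0]
      · rw [if_neg (by omega), gp_cmp_lt s (by omega : i - 1 < i), hL (by omega)]
        simp
    unfold ee
    rw [hmn, gp_cmp_eq s]
    norm_num
  · rw [if_neg (by omega), if_neg (by omega)]
    rcases eq_or_lt_of_le (Nat.succ_le_of_lt hik) with hik1 | hik1
    · -- i = k + 1
      have hi : i = k + 1 := hik1.symm
      subst hi
      have hgp : gp (cmp k s) (k + 1) = 1 := by rw [gp_cmp_gt s (by omega)]; simpa using hR
      have hmn : mn (cmp k s) (k + 1) = 0 := by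
        rw [mn_succ, gp_cmp_eq s, gp_cmp_gt s (by omega : k < k + 2)]
        exact min_eq_left (gp_nonneg hm _)
      have lhs1 : ee (cmp k s) (k + 1) = 1 := by
        unfold ee
        rw [hmn, hgp]
        norm_num
      have rhs1 : ee s (k + 1 - 1) = 1 := by
        apply ee_eq_one
        rw [show k + 1 - 1 = k from rfl, hR]
        exact mn_le_one htt k
      rw [lhs1, rhs1]
    · -- i ≥ k + 2
      have h2 : k + 2 ≤ i := by omega
      have e1 : gp (cmp k s) i = gp s (i - 1) := gp_cmp_gt s (by omega)
      have e2 : mn (cmp k s) i = min (gp s (i - 2)) (gp s i) := by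
        unfold mn
        rw [if_neg (by omega), gp_cmp_gt s (by omega : k < i - 1),
          gp_cmp_gt s (by omega : k < i + 1), show i - 1 - 1 = i - 2 from rfl,
          show i + 1 - 1 = i from rfl]
      have e3 : mn s (i - 1) = min (gp s (i - 2)) (gp s i) := by
        rw [show i - 1 = (i - 2) + 1 by omega, mn_succ, show i - 2 + 2 = i by omega]
      unfold ee
      rw [e1, e2, e3]

include hm htt hL hR in
lemma V_cmp : ∀ i, V (cmp k s) i = V s (σf k i) := by
  intro i
  induction i with
  | zero => simp [V, cmp, σf_zero]
  | succ i ih =>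
    have step : V (cmp k s) (i + 1) = V (cmp k s) i + ee (cmp k s) i := rfl
    rw [step, ih, ee_cmp hm htt hL hR i]
    rcases lt_trichotomy i k with h | h | h
    · rw [if_pos h, σf_le (by omega : i ≤ k), σf_le (by omega : i + 1 ≤ k)]
      rfl
    · subst h
      rw [if_neg (lt_irrefl i), if_pos rfl, σf_le (le_refl i),
        σf_gt (by omega : i < i + 1)]
      simp
    · rw [if_neg (by omega), if_neg (by omega), σf_gt h, σf_gt (by omega : k < i + 1)]
      have e : i - 1 + 1 = i := by omega
      have st2 : V s (i - 1 + 1) = V s (i - 1) + ee s (i - 1) := rfl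
      rw [e] at st2
      rw [show i + 1 - 1 = i from rfl, st2]

end eeCmp

/-! ### ext / res / dup -/

def ext {n : ℕ} (t : Fin (n + 1) → ℝ) (i : ℕ) : ℝ :=
  if h : i ≤ n then t ⟨i, by omega⟩ else t ⟨n, by omega⟩ + ((i - n : ℕ) : ℝ)

def res (n : ℕ) (s : ℕ → ℝ) : Fin (n + 1) → ℝ := fun i => s i

lemma ext_le {n : ℕ} (t : Fin (n + 1) → ℝ) {i : ℕ} (h : i ≤ n) :
    ext t i = t ⟨i, by omega⟩ := dif_pos h

lemma ext_ge {n : ℕ} (t : Fin (n + 1) → ℝ) {i : ℕ} (h : n ≤ i) :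
    ext t i = t ⟨n, by omega⟩ + ((i - n : ℕ) : ℝ) := by
  rcases eq_or_lt_of_le h with h' | h'
  · rw [← h', ext_le t (le_refl n)]
    simp
  · exact dif_neg (by omega)

lemma res_ext {n : ℕ} (t : Fin (n + 1) → ℝ) : res n (ext t) = t := by
  funext j
  rw [show res n (ext t) j = ext t j.val from rfl, ext_le t (by omega : j.val ≤ n)]

lemma res_mem {n : ℕ} {s : ℕ → ℝ} (hs : Good s) : res n s ∈ CFset (n + 1) := by
  refine ⟨fun a b hab => hs.1 (show a.val ≤ b.val from hab), fun i h => hs.2 i⟩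

lemma good_ext {n : ℕ} {t : Fin (n + 1) → ℝ} (ht : t ∈ CFset (n + 1)) : Good (ext t) := by
  constructor
  · apply monotone_of_gp
    intro i
    rcases le_or_gt (i + 1) n with h | h
    · rw [gp, ext_le t h, ext_le t (show i ≤ n by omega)]
      refine sub_nonneg.2 (ht.1 ?_)
      simp [Fin.le_def]
    · rw [gp, ext_ge t (by omega : n ≤ i), ext_ge t (by omega : n ≤ i + 1)]
      have e : i + 1 - n = (i - n) + 1 := by omega
      rw [e]
      push_cast
      linarith
  · intro i
    rcases lt_trichotomy (i + 2) (n + 1) with h | h | h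
    · rw [ext_le t (by omega), ext_le t (by omega)]
      exact ht.2 i h
    · rw [ext_ge t (by omega : n ≤ i + 2), ext_le t (by omega : i ≤ n)]
      have e : (i + 2 - n) = 1 := by omega
      rw [e]
      have hle : t ⟨i, by omega⟩ ≤ t ⟨n, by omega⟩ := by
        apply ht.1
        simp [Fin.le_def]
        omega
      push_cast
      linarith
    · rw [ext_ge t (by omega : n ≤ i + 2), ext_ge t (by omega : n ≤ i)]
      have e : (i + 2 - n) = (i - n) + 2 := by omega
      rw [e]
      push_cast
      linarith

lemma σf_lt_succ {n : ℕ} (k : Fin (n + 1)) {j : ℕ} (hj : j < n + 2) : σf (k : ℕ) j ≤ n := by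
  have := k.2
  unfold σf
  split <;> omega

lemma dup_apply {n : ℕ} (t : Fin (n + 1) → ℝ) (k : Fin (n + 1)) (j : Fin (n + 2)) :
    dup t k j = t ⟨σf (k : ℕ) (j : ℕ), by have := k.2; have := j.2; unfold σf; split <;> omega⟩ := by
  rcases lt_trichotomy (j : ℕ) (k : ℕ) with h | h | h
  · have hj : j < Fin.castSucc k := by
      rw [Fin.lt_def]
      simpa using h
    rw [dup, Fin.insertNth_apply_below hj]
    simp only [eq_rec_constant]
    congr 1
    rw [Fin.ext_iff]
    simp [σf_le (by omega : (j:ℕ) ≤ (k:ℕ))]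
  · have hj : j = Fin.castSucc k := by
      rw [Fin.ext_iff]
      simpa using h
    rw [dup, hj, Fin.insertNth_apply_same]
    congr 1
    rw [Fin.ext_iff]
    simp [σf_le (le_refl (k:ℕ)), h]
  · have hj : Fin.castSucc k < j := by
      rw [Fin.lt_def]
      simpa using h
    rw [dup, Fin.insertNth_apply_above hj]
    simp only [eq_rec_constant]
    congr 1
    rw [Fin.ext_iff]
    simp [σf_gt h]

lemma ext_dup {n : ℕ} (t : Fin (n + 1) → ℝ) (k : Fin (n + 1)) :
    ext (dup t k) = cmp (k : ℕ) (ext t) := by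
  funext i
  rcases le_or_gt i (n + 1) with h | h
  · rw [ext_le (dup t k) (by omega : i ≤ n + 1)]
    rw [show (⟨i, by omega⟩ : Fin (n + 2)) = ⟨i, by omega⟩ from rfl, dup_apply t k ⟨i, by omega⟩]
    rw [cmp, ext_le t (σf_lt_succ k (by omega))]
  · have hk := k.2
    rw [ext_ge (dup t k) (by omega : n + 1 ≤ i)]
    rw [cmp, σf_gt (show (k : ℕ) < i by omega), ext_ge t (by omega : n ≤ i - 1)]
    rw [dup_apply t k ⟨n + 1, by omega⟩]
    have e1 : σf (k : ℕ) (n + 1) = n := by rw [σf_gt (by omega)]; omega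
    have e2 : i - (n + 1) = i - 1 - n := by omega
    rw [e2]
    congr 2
    rw [Fin.ext_iff]
    simpa using e1

lemma res_cmp {n : ℕ} (s : ℕ → ℝ) (k : Fin (n + 1)) :
    res (n + 1) (cmp (k : ℕ) s) = dup (res n s) k := by
  funext j
  rw [dup_apply (res n s) k j]
  rfl

lemma flankR {n : ℕ} {t : Fin (n + 1) → ℝ} {k : Fin (n + 1)}
    (ht : t ∈ CFset (n + 1)) (hd : dup t k ∈ CFset (n + 2)) :
    1 ≤ gp (ext t) (k : ℕ) := by
  rcases eq_or_lt_of_le (Nat.lt_succ_iff.mp k.2) with hk | hk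
  · rw [gp, ext_ge t (by omega : n ≤ (k : ℕ) + 1), ext_le t (by omega : (k:ℕ) ≤ n)]
    have e : (k : ℕ) + 1 - n = 1 := by omega
    rw [e]
    have : t ⟨(k:ℕ), by omega⟩ = t ⟨n, by omega⟩ := by congr 1; rw [Fin.ext_iff]; exact hk
    rw [this]
    push_cast
    linarith
  · have h2 := hd.2 (k : ℕ) (by omega)
    rw [dup_apply t k ⟨(k:ℕ) + 2, by omega⟩, dup_apply t k ⟨(k:ℕ), by omega⟩] at h2
    rw [gp, ext_le t (by omega), ext_le t (by omega)]
    have e1 : σf (k:ℕ) ((k:ℕ) + 2) = (k:ℕ) + 1 := by rw [σf_gt (by omega)]; omega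
    have e2 : σf (k:ℕ) (k:ℕ) = (k:ℕ) := σf_le (le_refl _)
    simp only [e1, e2] at h2
    exact h2

lemma flankL {n : ℕ} {t : Fin (n + 1) → ℝ} {k : Fin (n + 1)}
    (ht : t ∈ CFset (n + 1)) (hd : dup t k ∈ CFset (n + 2)) (hk : 1 ≤ (k : ℕ)) :
    1 ≤ gp (ext t) ((k : ℕ) - 1) := by
  have hkn := k.2
  have h2 := hd.2 ((k : ℕ) - 1) (by omega)
  rw [dup_apply t k ⟨(k:ℕ) - 1 + 2, by omega⟩, dup_apply t k ⟨(k:ℕ) - 1, by omega⟩] at h2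
  have e1 : σf (k:ℕ) ((k:ℕ) - 1 + 2) = (k:ℕ) := by rw [σf_gt (by omega)]; omega
  have e2 : σf (k:ℕ) ((k:ℕ) - 1) = (k:ℕ) - 1 := σf_le (by omega)
  simp only [e1, e2] at h2
  rw [gp, ext_le t (by omega), ext_le t (by omega)]
  have e3 : (k:ℕ) - 1 + 1 = (k:ℕ) := by omega
  simp only [e3]
  exact h2

/-! ### continuity helpers -/

section contOps

variable {α : Type} [TopologicalSpace α] {f : α → ℕ → ℝ}

lemma cont_T (hf : ∀ i, Continuous fun x => f x i) (i : ℕ) :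
    Continuous fun x => T (f x) i := by
  unfold T
  exact ((hf i).sub (hf 0)).add continuous_const

lemma cont_Uh (hf : ∀ i, Continuous fun x => f x i) (i : ℕ) :
    Continuous fun x => Uh (f x) i := by
  induction i with
  | zero => exact hf 0
  | succ i ih =>
    exact ih.add (continuous_const.min ((hf (i + 1)).sub (hf i)))

lemma cont_gp (hf : ∀ i, Continuous fun x => f x i) (i : ℕ) :
    Continuous fun x => gp (f x) i := (hf (i + 1)).sub (hf i)

lemma cont_mn (hf : ∀ i, Continuous fun x => f x i) (i : ℕ) :
    Continuous fun x => mn (f x) i := by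
  cases i with
  | zero =>
    simp only [mn_zero]
    exact continuous_const.min (cont_gp hf 1)
  | succ i =>
    simp only [mn_succ]
    exact (cont_gp hf i).min (cont_gp hf (i + 2))

lemma cont_ee (hf : ∀ i, Continuous fun x => f x i) (i : ℕ) :
    Continuous fun x => ee (f x) i := by
  unfold ee
  exact continuous_const.min ((continuous_const.add (cont_gp hf i)).sub (cont_mn hf i))

lemma cont_V (hf : ∀ i, Continuous fun x => f x i) (i : ℕ) :
    Continuous fun x => V (f x) i := by
  induction i with
  | zero => exact hf 0
  | succ i ih => exact ih.add (cont_ee hf i)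

lemma cont_itp {a : α → ℝ} {f' : α → ℕ → ℝ} (ha : Continuous a)
    (hf : ∀ i, Continuous fun x => f x i) (hf' : ∀ i, Continuous fun x => f' x i) (i : ℕ) :
    Continuous fun x => itp (a x) (f x) (f' x) i := by
  unfold itp
  exact ((continuous_const.sub ha).mul (hf i)).add (ha.mul (hf' i))

end contOps

lemma cont_ext (n j : ℕ) : Continuous fun v : CFn (n + 1) => ext (v : Fin (n + 1) → ℝ) j := by
  by_cases h : j ≤ n
  · simp only [ext, dif_pos h]
    exact (continuous_apply _).comp continuous_subtype_val
  · simp only [ext, dif_neg h]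
    exact ((continuous_apply _).comp continuous_subtype_val).add continuous_const

/-! ### CF-level machinery -/

def mkc {n : ℕ} (t : Fin (n + 1) → ℝ) (h : t ∈ CFset (n + 1)) : CF :=
  Quot.mk CFrel ⟨n, ⟨t, h⟩⟩

lemma mkc_dup {n : ℕ} (t : Fin (n + 1) → ℝ) (h : t ∈ CFset (n + 1)) (k : Fin (n + 1))
    (h2 : dup t k ∈ CFset (n + 2)) : mkc (dup t k) h2 = mkc t h :=
  (Quot.sound ⟨k, h2, rfl⟩).symm

lemma mkc_congr {n : ℕ} {t t' : Fin (n + 1) → ℝ} (e : t = t') {h : t ∈ CFset (n + 1)}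
    {h' : t' ∈ CFset (n + 1)} : mkc t h = mkc t' h' := by subst e; rfl

/-- The data of one stage of the deformation retraction. -/
structure StageData where
  F : ℝ → (ℕ → ℝ) → ℕ → ℝ
  good : ∀ a : ℝ, 0 ≤ a → a ≤ 1 → ∀ s, Good s → Good (F a s)
  comm : ∀ (a : ℝ) {n : ℕ} (t : Fin (n + 1) → ℝ), t ∈ CFset (n + 1) →
    ∀ (k : Fin (n + 1)), dup t k ∈ CFset (n + 2) →
      F a (cmp (k : ℕ) (ext t)) = cmp (k : ℕ) (F a (ext t))
  cont : ∀ (n i : ℕ),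
    Continuous fun p : CFn (n + 1) × I => F (p.2 : ℝ) (ext (p.1 : Fin (n + 1) → ℝ)) i

namespace StageData

variable (S : StageData)

def app {n : ℕ} (a : ℝ) (ha0 : 0 ≤ a) (ha1 : a ≤ 1) (t : Fin (n + 1) → ℝ)
    (ht : t ∈ CFset (n + 1)) : CF :=
  mkc (res n (S.F a (ext t))) (res_mem (S.good a ha0 ha1 _ (good_ext ht)))

lemma app_dup {n : ℕ} (a : ℝ) (ha0 : 0 ≤ a) (ha1 : a ≤ 1) (t : Fin (n + 1) → ℝ)
    (ht : t ∈ CFset (n + 1)) (k : Fin (n + 1)) (hd : dup t k ∈ CFset (n + 2)) :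
    S.app a ha0 ha1 (dup t k) hd = S.app a ha0 ha1 t ht := by
  unfold app
  have e : res (n + 1) (S.F a (ext (dup t k))) = dup (res n (S.F a (ext t))) k := by
    rw [ext_dup, S.comm a t ht k hd, res_cmp]
  rw [mkc_congr e (h' := e ▸ res_mem (S.good a ha0 ha1 _ (good_ext hd)))]
  exact mkc_dup _ (res_mem (S.good a ha0 ha1 _ (good_ext ht))) k _

def fn (n : ℕ) : C(CFn (n + 1) × I, CF) where
  toFun p := S.app (p.2 : ℝ) p.2.2.1 p.2.2.2 (p.1 : Fin (n + 1) → ℝ) p.1.2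
  continuous_toFun := by
    apply Continuous.comp continuous_quot_mk
    apply Continuous.comp continuous_sigmaMk
    apply Continuous.subtype_mk
    apply continuous_pi
    intro j
    exact S.cont n j

def pre : PreCF → C(I, CF) := fun x => ((S.fn x.1).curry) x.2

lemma pre_cont : Continuous S.pre :=
  continuous_sigma fun n => ((S.fn n).curry).continuous

lemma pre_compat : ∀ x y, CFrel x y → S.pre x = S.pre y := by
  rintro ⟨n, t⟩ y ⟨k, hd, rfl⟩
  apply ContinuousMap.ext
  intro a
  show (S.fn n) (t, a) = (S.fn (n + 1)) (⟨dup (t : Fin (n + 1) → ℝ) k, hd⟩, a)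
  exact (S.app_dup (a : ℝ) a.2.1 a.2.2 _ t.2 k hd).symm

def lifted : C(CF, C(I, CF)) :=
  ⟨Quot.lift S.pre S.pre_compat, continuous_quot_lift _ S.pre_cont⟩

def H : C(CF × I, CF) := S.lifted.uncurry

lemma H_mk {n : ℕ} (t : Fin (n + 1) → ℝ) (ht : t ∈ CFset (n + 1)) (a : I) :
    S.H (mkc t ht, a) = S.app (a : ℝ) a.2.1 a.2.2 t ht := by
  simp only [H, ContinuousMap.uncurry_apply, lifted, ContinuousMap.coe_mk]
  show S.pre ⟨n, ⟨t, ht⟩⟩ a = S.app (a : ℝ) a.2.1 a.2.2 t ht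
  rfl

/-- The time-one map of a stage. -/
def ev1 : C(CF, CF) :=
  ⟨fun x => S.H (x, 1), S.H.continuous.comp (continuous_id.prodMk continuous_const)⟩

lemma ev1_mk {n : ℕ} (t : Fin (n + 1) → ℝ) (ht : t ∈ CFset (n + 1)) :
    S.ev1 (mkc t ht) = S.app 1 zero_le_one le_rfl t ht := by
  show S.H (mkc t ht, 1) = _
  rw [S.H_mk t ht 1]
  rfl

end StageData

/-! ### the three concrete stages -/

lemma good_h1 (a : ℝ) {s : ℕ → ℝ} (hs : Good s) : Good (h1 a s) := by
  constructor
  · intro i j hij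
    simp only [h1]
    have := hs.1 hij
    linarith
  · intro i
    have := hs.2 i
    simp only [h1]
    linarith

def stage1 : StageData where
  F a s := h1 a s
  good a _ _ s hs := good_h1 a hs
  comm := by
    intro a n t ht k hd
    exact h1_cmp a _ _
  cont n i := by
    have hb : ∀ j, Continuous fun p : CFn (n + 1) × I => ext (p.1 : Fin (n + 1) → ℝ) j :=
      fun j => (cont_ext n j).comp continuous_fst
    have ha : Continuous fun p : CFn (n + 1) × I => (p.2 : ℝ) :=
      continuous_subtype_val.comp continuous_snd
    exact (hb i).sub (ha.mul ((hb 0).sub continuous_const))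

lemma Uh_T_cmp {n : ℕ} (t : Fin (n + 1) → ℝ) (k : ℕ) :
    Uh (T (cmp k (ext t))) = cmp k (Uh (T (ext t))) := by
  rw [T_cmp]
  funext i
  rw [Uh_cmp]
  rfl

def stage2 : StageData where
  F a s := itp a (T s) (Uh (T s))
  good a ha0 ha1 s hs := good_itp ha0 ha1 (good_T hs) (good_Uh (good_T hs))
  comm := by
    intro a n t ht k hd
    rw [Uh_T_cmp, T_cmp, itp_cmp]
  cont n i := by
    have hb : ∀ j, Continuous fun p : CFn (n + 1) × I => ext (p.1 : Fin (n + 1) → ℝ) j :=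
      fun j => (cont_ext n j).comp continuous_fst
    have ha : Continuous fun p : CFn (n + 1) × I => (p.2 : ℝ) :=
      continuous_subtype_val.comp continuous_snd
    exact cont_itp ha (cont_T hb) (cont_Uh (cont_T hb)) i

def stage3 : StageData where
  F a s := itp a (Uh (T s)) (V (Uh (T s)))
  good a ha0 ha1 s hs :=
    good_itp ha0 ha1 (good_Uh (good_T hs)) (good_V (good_Uh (good_T hs)) (tight_Uh _))
  comm := by
    intro a n t ht k hd
    have hW : Good (Uh (T (ext t))) := good_Uh (good_T (good_ext ht))
    have hWt : Tight (Uh (T (ext t))) := tight_Uh _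
    have hL : 1 ≤ (k : ℕ) → gp (Uh (T (ext t))) ((k : ℕ) - 1) = 1 := fun hk => by
      apply gp_Uh_eq_one
      rw [gp_T]
      exact flankL ht hd hk
    have hR : gp (Uh (T (ext t))) (k : ℕ) = 1 := by
      apply gp_Uh_eq_one
      rw [gp_T]
      exact flankR ht hd
    have e2 : V (cmp (k : ℕ) (Uh (T (ext t)))) = cmp (k : ℕ) (V (Uh (T (ext t)))) := by
      funext i
      rw [V_cmp hW.1 hWt hL hR]
      rfl
    rw [Uh_T_cmp, e2, itp_cmp]
  cont n i := by
    have hb : ∀ j, Continuous fun p : CFn (n + 1) × I => ext (p.1 : Fin (n + 1) → ℝ) j :=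
      fun j => (cont_ext n j).comp continuous_fst
    have ha : Continuous fun p : CFn (n + 1) × I => (p.2 : ℝ) :=
      continuous_subtype_val.comp continuous_snd
    exact cont_itp ha (cont_Uh (cont_T hb)) (cont_V (cont_Uh (cont_T hb))) i

/-! ### endpoint identifications -/

lemma coeI_zero : (((0 : I) : ℝ)) = 0 := rfl

lemma coeI_one : (((1 : I) : ℝ)) = 1 := rfl

lemma ev0_stage1 : ∀ x : CF, stage1.H (x, 0) = x := by
  apply Quot.ind
  rintro ⟨n, t, ht⟩
  show stage1.H (mkc t ht, 0) = mkc t ht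
  rw [stage1.H_mk]
  unfold StageData.app
  apply mkc_congr
  show res n (h1 ((0 : I) : ℝ) (ext t)) = t
  have e : h1 ((0 : I) : ℝ) (ext t) = ext t := by
    funext i
    simp only [coeI_zero, h1]
    ring
  rw [e, res_ext]

lemma match12 : ∀ x : CF, stage1.H (x, 1) = stage2.H (x, 0) := by
  apply Quot.ind
  rintro ⟨n, t, ht⟩
  show stage1.H (mkc t ht, 1) = stage2.H (mkc t ht, 0)
  rw [stage1.H_mk, stage2.H_mk]
  unfold StageData.app
  apply mkc_congr
  show res n (h1 ((1 : I) : ℝ) (ext t)) =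
    res n (itp ((0 : I) : ℝ) (T (ext t)) (Uh (T (ext t))))
  rw [coeI_zero, coeI_one, itp_zero]
  funext i
  show ext t i - 1 * (ext t 0 - 1) = ext t i - ext t 0 + 1
  ring

lemma match23 : ∀ x : CF, stage2.H (x, 1) = stage3.H (x, 0) := by
  apply Quot.ind
  rintro ⟨n, t, ht⟩
  show stage2.H (mkc t ht, 1) = stage3.H (mkc t ht, 0)
  rw [stage2.H_mk, stage3.H_mk]
  unfold StageData.app
  apply mkc_congr
  show res n (itp ((1 : I) : ℝ) (T (ext t)) (Uh (T (ext t)))) =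
    res n (itp ((0 : I) : ℝ) (Uh (T (ext t))) (V (Uh (T (ext t)))))
  rw [coeI_zero, coeI_one, itp_zero, itp_one]

/-! ### homotopies -/

def Hom1 : (ContinuousMap.id CF).Homotopy stage1.ev1 where
  toFun p := stage1.H (p.2, p.1)
  continuous_toFun := stage1.H.continuous.comp (continuous_snd.prodMk continuous_fst)
  map_zero_left := ev0_stage1
  map_one_left _ := rfl

def Hom2 : stage1.ev1.Homotopy stage2.ev1 where
  toFun p := stage2.H (p.2, p.1)
  continuous_toFun := stage2.H.continuous.comp (continuous_snd.prodMk continuous_fst)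
  map_zero_left x := (match12 x).symm
  map_one_left _ := rfl

def Hom3 : stage2.ev1.Homotopy stage3.ev1 where
  toFun p := stage3.H (p.2, p.1)
  continuous_toFun := stage3.H.continuous.comp (continuous_snd.prodMk continuous_fst)
  map_zero_left x := (match23 x).symm
  map_one_left _ := rfl

def Htot : (ContinuousMap.id CF).Homotopy stage3.ev1 := (Hom1.trans Hom2).trans Hom3

/-! ### the retraction lands in DF -/

lemma NF_mem : ∀ x : CF, stage3.ev1 x ∈ DF := by
  apply Quot.ind
  rintro ⟨n, t, ht⟩
  show stage3.ev1 (mkc t ht) ∈ DF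
  rw [stage3.ev1_mk]
  have hgW : Good (Uh (T (ext t))) := good_Uh (good_T (good_ext ht))
  have htW : Tight (Uh (T (ext t))) := tight_Uh _
  have hmem : res n (V (Uh (T (ext t)))) ∈ CFset (n + 1) := res_mem (good_V hgW htW)
  have e : res n (stage3.F 1 (ext t)) = res n (V (Uh (T (ext t)))) := by
    show res n (itp 1 (Uh (T (ext t))) (V (Uh (T (ext t))))) = _
    rw [itp_one]
  unfold StageData.app
  rw [mkc_congr e (h' := hmem)]
  refine ⟨n, res n (V (Uh (T (ext t)))), hmem, ⟨?_, ?_, ?_⟩, rfl⟩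
  · intro h
    show V (Uh (T (ext t))) 0 = 1
    rw [V_zero]
    show T (ext t) 0 = 1
    exact T_zero _
  · intro i h
    show V (Uh (T (ext t))) (i + 1) - V (Uh (T (ext t))) i ≤ 1
    have := tight_V (Uh (T (ext t))) i
    rwa [gp] at this
  · intro i h hlt
    have hlt' : ee (Uh (T (ext t))) i < 1 := by
      rw [← gp_V]
      rw [gp]
      exact hlt
    obtain ⟨hLft, hRgt⟩ := Lprop hgW.1 htW hlt'
    constructor
    · intro h1
      show V (Uh (T (ext t))) i - V (Uh (T (ext t))) (i - 1) = 1
      have e2 := gp_V (Uh (T (ext t))) (i - 1)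
      rw [hLft h1, gp, show i - 1 + 1 = i by omega] at e2
      linarith
    · intro h2
      show V (Uh (T (ext t))) (i + 2) - V (Uh (T (ext t))) (i + 1) = 1
      have e2 := gp_V (Uh (T (ext t))) (i + 1)
      rw [hRgt, gp] at e2
      linarith

def rmap : C(CF, ↥DF) :=
  ⟨fun x => ⟨stage3.ev1 x, NF_mem x⟩, stage3.ev1.continuous.subtype_mk NF_mem⟩

def incl : C(↥DF, CF) := ⟨Subtype.val, continuous_subtype_val⟩

/-! ### identity on DF -/

lemma gp_ext_ge {n : ℕ} (t : Fin (n + 1) → ℝ) {i : ℕ} (h : n ≤ i) : gp (ext t) i = 1 := by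
  rw [gp, ext_ge t (by omega : n ≤ i + 1), ext_ge t h]
  have e : i + 1 - n = (i - n) + 1 := by omega
  rw [e]
  push_cast
  ring

lemma NF_fix {n : ℕ} {t : Fin (n + 1) → ℝ} (ht : t ∈ CFset (n + 1)) (hdf : DFcond t) :
    stage3.ev1 (mkc t ht) = mkc t ht := by
  rw [stage3.ev1_mk]
  unfold StageData.app
  apply mkc_congr
  have h0 : ext t 0 = 1 := by
    rw [ext_le t (Nat.zero_le n)]
    exact hdf.1 (by omega)
  have hT : T (ext t) = ext t := by
    funext i
    simp only [T, h0]
    ring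
  have htight : Tight (ext t) := by
    intro i
    rcases le_or_gt (i + 1) n with h | h
    · rw [gp, ext_le t h, ext_le t (show i ≤ n by omega)]
      exact hdf.2.1 i (by omega)
    · rw [gp_ext_ge t (by omega : n ≤ i)]
  have hU : Uh (ext t) = ext t := funext (Uh_eq_of_tight htight)
  have hdfx : ∀ i, gp (ext t) i < 1 →
      ((1 ≤ i → gp (ext t) (i - 1) = 1) ∧ gp (ext t) (i + 1) = 1) := by
    intro i hlt
    rcases lt_or_ge i n with h | h
    · have hlt2 : t ⟨i + 1, by omega⟩ - t ⟨i, by omega⟩ < 1 := by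
        rw [gp, ext_le t (by omega : i + 1 ≤ n), ext_le t (show i ≤ n by omega)] at hlt
        exact hlt
      obtain ⟨c1, c2⟩ := hdf.2.2 i (by omega) hlt2
      constructor
      · intro h1
        rw [gp, show i - 1 + 1 = i by omega, ext_le t (show i ≤ n by omega),
          ext_le t (by omega : i - 1 ≤ n)]
        exact c1 h1
      · rcases le_or_gt (i + 2) n with h' | h'
        · rw [gp, ext_le t h', ext_le t (by omega : i + 1 ≤ n)]
          exact c2 (by omega)
        · exact gp_ext_ge t (by omega)
    · rw [gp_ext_ge t h] at hlt
      norm_num at hlt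
  have hV : V (ext t) = ext t := funext (V_eq_of_DF (good_ext ht).1 htight hdfx)
  show res n (itp 1 (Uh (T (ext t))) (V (Uh (T (ext t))))) = t
  rw [itp_one, hT, hU, hV, res_ext]

/-! ### conclusion -/

theorem main : Nonempty (ContinuousMap.HomotopyEquiv CF ↥DF) := by
  refine ⟨{ toFun := rmap, invFun := incl, left_inv := ?_, right_inv := ?_ }⟩
  · have e : incl.comp rmap = stage3.ev1 := ContinuousMap.ext fun x => rfl
    rw [e]
    exact ⟨Htot.symm⟩
  · have e : rmap.comp incl = ContinuousMap.id _ := by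
      apply ContinuousMap.ext
      rintro ⟨x, hx⟩
      obtain ⟨n, t, ht, hdf, rfl⟩ := hx
      apply Subtype.ext
      exact NF_fix ht hdf
    rw [e]

end

end Belk

/-- Belk's space `CF` is homotopy equivalent to its subspace `DF`. -/
theorem CF_homotopyEquiv_DF : Nonempty (ContinuousMap.HomotopyEquiv CF ↥DF) :=
  Belk.main
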